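/- (Convergence horizon for one step of tensor block randomized Kaczmarz.) Let U ∈ ℝ^{m×m₁×p} and Y, E ∈ ℝ^{m×l×p}, and let X‡ ∈ ℝ^{m₁×l×p} satisfy U∗X‡ = Y. Let (T_U, prob_U) be a block sampling scheme on the row slices of U such that U_μ∗U_μ^⊤ is t-invertible for every μ ∈ T_U, and let d_{T_U} be the largest cardinality of a block in T_U. For X ∈ ℝ^{m₁×l×p} and μ ∈ T_U define X⁺(μ) = X − U_μ^⊤ ∗ (U_μ∗U_μ^⊤)^{-1} ∗ (U_μ∗X − Y_μ − E_μ). Then Σ_{μ∈T_U} prob_U(μ)·‖X⁺(μ) − X‡‖_F² ≤ (1 − σ_min(Σ_{μ∈T_U} prob_U(μ)·bcirc(P_{U_μ})))·‖X − X‡‖_F² + d_{T_U}·p·Σ_{μ∈T_U} prob_U(μ)·‖(bcirc(U_μ)bcirc(U_μ)^⊤)^{-1}‖₂·‖E_μ‖_F². -/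

import Mathlib

open Matrix
open scoped BigOperators

/-- A real third-order tensor with row index `I`, column index `J`, and `p` frontal slices. -/
abbrev Tensor (I J : Type*) (p : ℕ) := I → J → Fin p → ℝ

namespace Tensor

variable {I J K : Type*} {p : ℕ}

/-- Block-circulant matricization: `bcirc A [(i,k),(j,l)] = A i j ((k - l) mod p)`. -/
def bcirc (A : Tensor I J p) : Matrix (I × Fin p) (J × Fin p) ℝ :=
  Matrix.of fun ik jl => A ik.1 jl.1 (ik.2 - jl.2)

/-- Unfolding along the second mode: `unfold B [(j,k), i] = B j i k`. -/
def unfold {S : Type*} (B : Tensor J S p) : Matrix (J × Fin p) S ℝ :=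
  Matrix.of fun jk s => B jk.1 s jk.2

/-- The t-product, the unique tensor with `unfold (A ∗ B) = bcirc A * unfold B`. -/
def tprod [Fintype J] (A : Tensor I J p) (B : Tensor J K p) : Tensor I K p :=
  fun i s k => ∑ j : J, ∑ l : Fin p, A i j (k - l) * B j s l

/-- Tensor transpose: `Aᵀ j i k = A i j ((-k) mod p)`. -/
def ttrans (A : Tensor I J p) : Tensor J I p := fun j i k => A i j (-k)

/-- The identity tensor: first frontal slice is the identity, the others are zero. -/
def tid (I : Type*) [DecidableEq I] (p : ℕ) : Tensor I I p :=
  fun i j k => if i = j ∧ (k : ℕ) = 0 then 1 else 0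

/-- t-invertibility of a square tensor. -/
def TInvertible [Fintype I] [DecidableEq I] (S : Tensor I I p) : Prop :=
  ∃ T : Tensor I I p, tprod S T = tid I p ∧ tprod T S = tid I p

open Classical in
/-- The t-inverse of a square tensor (junk value when not t-invertible). -/
noncomputable def tinv [Fintype I] [DecidableEq I] (S : Tensor I I p) : Tensor I I p :=
  if h : TInvertible S then h.choose else 0

/-- The projection tensor `P_M = Mᵀ ∗ (M ∗ Mᵀ)⁻¹ ∗ M`. -/
noncomputable def proj [Fintype I] [DecidableEq I] [Fintype J] (M : Tensor I J p) :
    Tensor J J p :=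
  tprod (ttrans M) (tprod (tinv (tprod M (ttrans M))) M)

/-- The projection tensor `P_{Mᵀ} = M ∗ (Mᵀ ∗ M)⁻¹ ∗ Mᵀ`. -/
noncomputable def projT [Fintype I] [Fintype J] [DecidableEq J] (M : Tensor I J p) :
    Tensor I I p :=
  tprod M (tprod (tinv (tprod (ttrans M) M)) (ttrans M))

/-- The Frobenius inner product of two tensors. -/
def tinner [Fintype I] [Fintype J] (A B : Tensor I J p) : ℝ :=
  ∑ i : I, ∑ j : J, ∑ k : Fin p, A i j k * B i j k

/-- The squared Frobenius norm of a tensor. -/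
def frobSq [Fintype I] [Fintype J] (A : Tensor I J p) : ℝ :=
  ∑ i : I, ∑ j : J, ∑ k : Fin p, (A i j k) ^ 2

/-- The Frobenius norm of a tensor. -/
noncomputable def frobNorm [Fintype I] [Fintype J] (A : Tensor I J p) : ℝ :=
  Real.sqrt (frobSq A)

/-- The subtensor of the row slices of `U` indexed by `μ`. -/
def rowSub (U : Tensor I J p) (μ : Finset I) : Tensor {i // i ∈ μ} J p :=
  fun i => U i.1

/-- The `j`-th lateral slice of `U`, as an `I × 1 × p` tensor. -/
def latSlice (U : Tensor I J p) (j : J) : Tensor I (Fin 1) p :=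
  fun i _ k => U i j k

/-- One (block) Kaczmarz step for the system with operator `U`, sampled row block `μ`,
current iterate `X` and measurement block `Bμ`:
`X ← X - U_μᵀ ∗ (U_μ ∗ U_μᵀ)⁻¹ ∗ (U_μ ∗ X - Bμ)`. -/
noncomputable def kaczStep [DecidableEq I] [Fintype J] (U : Tensor I J p) (μ : Finset I)
    (X : Tensor J K p) (Bμ : Tensor {i // i ∈ μ} K p) : Tensor J K p :=
  X - tprod (ttrans (rowSub U μ))
    (tprod (tinv (tprod (rowSub U μ) (ttrans (rowSub U μ))))
      (tprod (rowSub U μ) X - Bμ))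

/-- One extended (column-like) step:
`W ← W - U_{:j:} ∗ (U_{:j:}ᵀ ∗ U_{:j:})⁻¹ ∗ (U_{:j:}ᵀ ∗ W)`. -/
noncomputable def extStep [Fintype I] (U : Tensor I J p) (j : J) (W : Tensor I K p) :
    Tensor I K p :=
  W - tprod (latSlice U j)
    (tprod (tinv (tprod (ttrans (latSlice U j)) (latSlice U j)))
      (tprod (ttrans (latSlice U j)) W))

end Tensor

/-- Squared Frobenius norm of a real matrix. -/
def matFrobSq {I J : Type*} [Fintype I] [Fintype J] (A : Matrix I J ℝ) : ℝ :=
  ∑ i : I, ∑ j : J, (A i j) ^ 2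

/-- Spectral norm (largest singular value) of a real matrix, as the supremum of `‖A x‖`
over unit vectors `x`. -/
noncomputable def specNorm {I J : Type*} [Fintype I] [Fintype J] (A : Matrix I J ℝ) : ℝ :=
  sSup {r : ℝ | ∃ x : J → ℝ, (∑ j : J, (x j) ^ 2) = 1 ∧
    r = Real.sqrt (∑ i : I, (A.mulVec x i) ^ 2)}

/-- Smallest eigenvalue of a symmetric real matrix, via the Rayleigh quotient:
`σ_min(S) = inf {xᵀ S x : ‖x‖ = 1}`. -/
noncomputable def minEig {I : Type*} [Fintype I] (S : Matrix I I ℝ) : ℝ :=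
  sInf {r : ℝ | ∃ x : I → ℝ, (∑ i : I, (x i) ^ 2) = 1 ∧
    r = ∑ i : I, x i * S.mulVec x i}


section AuxVec

open Matrix

variable {ι κ : Type*} [Fintype ι] [Fintype κ]

private lemma aux_nsq_nonneg (x : ι → ℝ) : 0 ≤ ∑ i, x i ^ 2 :=
  Finset.sum_nonneg fun _ _ => sq_nonneg _

private lemma aux_nsq_eq_dot (x : ι → ℝ) : ∑ i, x i ^ 2 = x ⬝ᵥ x := by
  simp [dotProduct, pow_two]

private lemma aux_dot_le_sqrt (x y : ι → ℝ) :
    x ⬝ᵥ y ≤ Real.sqrt (∑ i, x i ^ 2) * Real.sqrt (∑ i, y i ^ 2) := by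
  have h := Finset.sum_mul_sq_le_sq_mul_sq Finset.univ x y
  calc x ⬝ᵥ y ≤ |∑ i, x i * y i| := le_abs_self _
    _ = Real.sqrt ((∑ i, x i * y i) ^ 2) := (Real.sqrt_sq_eq_abs _).symm
    _ ≤ Real.sqrt ((∑ i, x i ^ 2) * ∑ i, y i ^ 2) := Real.sqrt_le_sqrt h
    _ = _ := Real.sqrt_mul (aux_nsq_nonneg x) _

private lemma aux_mulVec_nsq_le (A : Matrix ι κ ℝ) (x : κ → ℝ) :
    ∑ i, (A.mulVec x i) ^ 2 ≤ matFrobSq A * ∑ j, x j ^ 2 := by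
  rw [matFrobSq, Finset.sum_mul]
  refine Finset.sum_le_sum fun i _ => ?_
  simpa [Matrix.mulVec, dotProduct] using
    Finset.sum_mul_sq_le_sq_mul_sq Finset.univ (fun j => A i j) x

private lemma aux_spec_mem_le (A : Matrix ι κ ℝ) {r : ℝ}
    (hr : r ∈ {r : ℝ | ∃ x : κ → ℝ, (∑ j : κ, (x j) ^ 2) = 1 ∧
      r = Real.sqrt (∑ i : ι, (A.mulVec x i) ^ 2)}) :
    r ≤ Real.sqrt (matFrobSq A) := by
  obtain ⟨x, hx, rfl⟩ := hr
  refine Real.sqrt_le_sqrt ?_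
  calc ∑ i, (A.mulVec x i) ^ 2 ≤ matFrobSq A * ∑ j, x j ^ 2 := aux_mulVec_nsq_le A x
    _ = matFrobSq A := by rw [hx, mul_one]

private lemma aux_spec_bddAbove (A : Matrix ι κ ℝ) :
    BddAbove {r : ℝ | ∃ x : κ → ℝ, (∑ j : κ, (x j) ^ 2) = 1 ∧
      r = Real.sqrt (∑ i : ι, (A.mulVec x i) ^ 2)} :=
  ⟨Real.sqrt (matFrobSq A), fun _ hr => aux_spec_mem_le A hr⟩

private lemma aux_specNorm_nonneg [Nonempty κ] (A : Matrix ι κ ℝ) : 0 ≤ specNorm A := by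
  classical
  obtain ⟨j₀⟩ := ‹Nonempty κ›
  set x : κ → ℝ := fun j => if j = j₀ then 1 else 0 with hxdef
  have hx : (∑ j : κ, (x j) ^ 2) = 1 := by simp [hxdef]
  have hmem : Real.sqrt (∑ i : ι, (A.mulVec x i) ^ 2) ∈
      {r : ℝ | ∃ x : κ → ℝ, (∑ j : κ, (x j) ^ 2) = 1 ∧
        r = Real.sqrt (∑ i : ι, (A.mulVec x i) ^ 2)} := ⟨x, hx, rfl⟩
  exact le_trans (Real.sqrt_nonneg _) (le_csSup (aux_spec_bddAbove A) hmem)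

/-- `‖Ax‖² ≤ specNorm A ^ 2 * ‖x‖²`. -/
private lemma aux_nsq_mulVec_le_spec (A : Matrix ι κ ℝ) (x : κ → ℝ) :
    ∑ i, (A.mulVec x i) ^ 2 ≤ specNorm A ^ 2 * ∑ j, x j ^ 2 := by
  by_cases hx : (∑ j, x j ^ 2) = 0
  · have hx0 : x = 0 := by
      funext j
      have := (Finset.sum_eq_zero_iff_of_nonneg
        (fun j _ => sq_nonneg (x j))).mp hx j (Finset.mem_univ j)
      exact pow_eq_zero_iff (two_ne_zero) |>.mp this
    simp [hx0, hx]
  · have hpos : 0 < ∑ j, x j ^ 2 := lt_of_le_of_ne (aux_nsq_nonneg x) (Ne.symm hx)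
    set c : ℝ := Real.sqrt (∑ j, x j ^ 2) with hc
    have hcpos : 0 < c := Real.sqrt_pos.mpr hpos
    set y : κ → ℝ := c⁻¹ • x with hy
    have hysq : (∑ j : κ, (y j) ^ 2) = 1 := by
      have : ∑ j : κ, (y j) ^ 2 = c⁻¹ ^ 2 * ∑ j, x j ^ 2 := by
        simp [hy, Finset.mul_sum, mul_pow]
      rw [this, hc, inv_pow, Real.sq_sqrt hpos.le, inv_mul_cancel₀ hpos.ne']
    have hmem : Real.sqrt (∑ i : ι, (A.mulVec y i) ^ 2) ∈
        {r : ℝ | ∃ x : κ → ℝ, (∑ j : κ, (x j) ^ 2) = 1 ∧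
          r = Real.sqrt (∑ i : ι, (A.mulVec x i) ^ 2)} := ⟨y, hysq, rfl⟩
    have hle : Real.sqrt (∑ i : ι, (A.mulVec y i) ^ 2) ≤ specNorm A :=
      le_csSup (aux_spec_bddAbove A) hmem
    have hAy : ∑ i, (A.mulVec y i) ^ 2 ≤ specNorm A ^ 2 := by
      have h0 : 0 ≤ ∑ i, (A.mulVec y i) ^ 2 := aux_nsq_nonneg _
      calc ∑ i, (A.mulVec y i) ^ 2
          = Real.sqrt (∑ i, (A.mulVec y i) ^ 2) ^ 2 := (Real.sq_sqrt h0).symm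
        _ ≤ specNorm A ^ 2 := by
            have h1 : (0:ℝ) ≤ Real.sqrt (∑ i, (A.mulVec y i) ^ 2) := Real.sqrt_nonneg _
            exact pow_le_pow_left₀ h1 hle 2
    have hxy : x = c • y := by
      rw [hy, smul_smul, mul_inv_cancel₀ hcpos.ne', one_smul]
    have hAx : A.mulVec x = c • A.mulVec y := by
      rw [hxy]; ext i; simp [Matrix.mulVec, dotProduct, Finset.mul_sum]
      exact Finset.sum_congr rfl fun j _ => by ring
    calc ∑ i, (A.mulVec x i) ^ 2 = c ^ 2 * ∑ i, (A.mulVec y i) ^ 2 := by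
          rw [hAx, Finset.mul_sum]
          exact Finset.sum_congr rfl fun i _ => by simp [mul_pow]
      _ ≤ c ^ 2 * specNorm A ^ 2 := by
          exact mul_le_mul_of_nonneg_left hAy (sq_nonneg c)
      _ = specNorm A ^ 2 * ∑ j, x j ^ 2 := by
          rw [hc, Real.sq_sqrt hpos.le]; ring

/-- Rayleigh-type bound: `⟨x, Ax⟩ ≤ specNorm A * ‖x‖²`. -/
private lemma aux_quadform_le_spec (A : Matrix ι ι ℝ) (x : ι → ℝ)
    (hA : 0 ≤ specNorm A) :
    x ⬝ᵥ A.mulVec x ≤ specNorm A * ∑ i, x i ^ 2 := by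
  calc x ⬝ᵥ A.mulVec x
      ≤ Real.sqrt (∑ i, x i ^ 2) * Real.sqrt (∑ i, (A.mulVec x i) ^ 2) :=
        aux_dot_le_sqrt _ _
    _ ≤ Real.sqrt (∑ i, x i ^ 2) * Real.sqrt (specNorm A ^ 2 * ∑ i, x i ^ 2) := by
        exact mul_le_mul_of_nonneg_left
          (Real.sqrt_le_sqrt (aux_nsq_mulVec_le_spec A x)) (Real.sqrt_nonneg _)
    _ = specNorm A * ∑ i, x i ^ 2 := by
        rw [Real.sqrt_mul (sq_nonneg _), Real.sqrt_sq hA]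
        rw [← mul_assoc, mul_comm (Real.sqrt _) (specNorm A), mul_assoc,
          Real.mul_self_sqrt (aux_nsq_nonneg x)]

private lemma aux_minEig_bddBelow (S : Matrix ι ι ℝ) :
    BddBelow {r : ℝ | ∃ x : ι → ℝ, (∑ i : ι, (x i) ^ 2) = 1 ∧
      r = ∑ i : ι, x i * S.mulVec x i} := by
  refine ⟨-Real.sqrt (matFrobSq S), fun r hr => ?_⟩
  obtain ⟨x, hx, rfl⟩ := hr
  have h1' := aux_dot_le_sqrt (-x) (S.mulVec x)
  have hneg : (-x) ⬝ᵥ (S.mulVec x) = -(∑ i, x i * S.mulVec x i) := by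
    simp [dotProduct]
  have hnsq : (∑ i, ((-x) i) ^ 2) = ∑ i, x i ^ 2 := by simp
  have h1 : -(∑ i, x i * S.mulVec x i) ≤
      Real.sqrt (∑ i, x i ^ 2) * Real.sqrt (∑ i, (S.mulVec x i) ^ 2) := by
    rw [← hneg, ← hnsq]; exact h1'
  have h2 : Real.sqrt (∑ i, (S.mulVec x i) ^ 2) ≤ Real.sqrt (matFrobSq S) := by
    refine Real.sqrt_le_sqrt ?_
    calc ∑ i, (S.mulVec x i) ^ 2 ≤ matFrobSq S * ∑ j, x j ^ 2 := aux_mulVec_nsq_le S x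
      _ = matFrobSq S := by rw [hx, mul_one]
  have h3 : Real.sqrt (∑ i, x i ^ 2) = 1 := by rw [hx, Real.sqrt_one]
  rw [h3, one_mul] at h1
  linarith

/-- Rayleigh-type bound: `minEig S * ‖x‖² ≤ ⟨x, Sx⟩`. -/
private lemma aux_minEig_quadform (S : Matrix ι ι ℝ) (x : ι → ℝ) :
    minEig S * ∑ i, x i ^ 2 ≤ x ⬝ᵥ S.mulVec x := by
  by_cases hx : (∑ i, x i ^ 2) = 0
  · have hx0 : x = 0 := by
      funext i
      have := (Finset.sum_eq_zero_iff_of_nonneg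
        (fun i _ => sq_nonneg (x i))).mp hx i (Finset.mem_univ i)
      exact pow_eq_zero_iff (two_ne_zero) |>.mp this
    simp [hx0, hx, dotProduct]
  · have hpos : 0 < ∑ i, x i ^ 2 := lt_of_le_of_ne (aux_nsq_nonneg x) (Ne.symm hx)
    set c : ℝ := Real.sqrt (∑ i, x i ^ 2) with hc
    have hcpos : 0 < c := Real.sqrt_pos.mpr hpos
    set y : ι → ℝ := c⁻¹ • x with hy
    have hysq : (∑ i : ι, (y i) ^ 2) = 1 := by
      have : ∑ i : ι, (y i) ^ 2 = c⁻¹ ^ 2 * ∑ i, x i ^ 2 := by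
        simp [hy, Finset.mul_sum, mul_pow]
      rw [this, hc, inv_pow, Real.sq_sqrt hpos.le, inv_mul_cancel₀ hpos.ne']
    have hmem : (∑ i, y i * S.mulVec y i) ∈
        {r : ℝ | ∃ x : ι → ℝ, (∑ i : ι, (x i) ^ 2) = 1 ∧
          r = ∑ i : ι, x i * S.mulVec x i} := ⟨y, hysq, rfl⟩
    have hle : minEig S ≤ ∑ i, y i * S.mulVec y i :=
      csInf_le (aux_minEig_bddBelow S) hmem
    have hSy : S.mulVec y = c⁻¹ • S.mulVec x := by
      rw [hy]; ext i; simp [Matrix.mulVec, dotProduct, Finset.mul_sum]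
      exact Finset.sum_congr rfl fun j _ => by ring
    have hquad : ∑ i, y i * S.mulVec y i = c⁻¹ ^ 2 * (x ⬝ᵥ S.mulVec x) := by
      rw [hSy, hy]
      simp only [Pi.smul_apply, smul_eq_mul, dotProduct, Finset.mul_sum]
      exact Finset.sum_congr rfl fun i _ => by ring
    have hc2 : c ^ 2 = ∑ i, x i ^ 2 := Real.sq_sqrt hpos.le
    have := mul_le_mul_of_nonneg_left (hle.trans_eq hquad) (sq_nonneg c)
    calc minEig S * ∑ i, x i ^ 2 = c ^ 2 * minEig S := by rw [hc2]; ring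
      _ ≤ c ^ 2 * (c⁻¹ ^ 2 * (x ⬝ᵥ S.mulVec x)) := this
      _ = x ⬝ᵥ S.mulVec x := by
          rw [← mul_assoc, ← mul_pow, mul_inv_cancel₀ hcpos.ne', one_pow, one_mul]

private lemma aux_sum_mulVec {n : Type*} {s : Finset n} (A : n → Matrix ι κ ℝ) (v : κ → ℝ) :
    (∑ i ∈ s, A i) *ᵥ v = ∑ i ∈ s, (A i *ᵥ v) := by
  ext j
  simp only [Matrix.mulVec, dotProduct, Finset.sum_apply, Matrix.sum_apply, Finset.sum_mul]
  rw [Finset.sum_comm]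

/-- Key vector identity for one Kaczmarz step. -/
private lemma aux_vec_key [DecidableEq ι] (Um : Matrix ι κ ℝ) (Bi : Matrix ι ι ℝ)
    (h1 : (Um * Umᵀ) * Bi = 1) (z : κ → ℝ) (e : ι → ℝ) :
    ∑ i, (z - Umᵀ *ᵥ (Bi *ᵥ (Um *ᵥ z - e))) i ^ 2
      = (∑ i, z i ^ 2) - z ⬝ᵥ ((Umᵀ * (Bi * Um)) *ᵥ z) + e ⬝ᵥ (Bi *ᵥ e) := by
  have hsym : Biᵀ = Bi := by
    have h1t : Biᵀ * (Um * Umᵀ) = 1 := by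
      have := congrArg Matrix.transpose h1
      simpa [Matrix.transpose_mul, Matrix.mul_assoc] using this
    calc Biᵀ = Biᵀ * ((Um * Umᵀ) * Bi) := by rw [h1, Matrix.mul_one]
      _ = (Biᵀ * (Um * Umᵀ)) * Bi := by rw [← Matrix.mul_assoc]
      _ = Bi := by rw [h1t, Matrix.one_mul]
  have hUU : ∀ v : ι → ℝ, Um *ᵥ (Umᵀ *ᵥ (Bi *ᵥ v)) = v := by
    intro v
    rw [Matrix.mulVec_mulVec, Matrix.mulVec_mulVec, h1, Matrix.one_mulVec]
  have hdotT : ∀ (v : κ → ℝ) (w : ι → ℝ), v ⬝ᵥ (Umᵀ *ᵥ w) = (Um *ᵥ v) ⬝ᵥ w := by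
    intro v w
    rw [Matrix.dotProduct_mulVec, Matrix.vecMul_transpose]
  have hBisym : ∀ (v w : ι → ℝ), v ⬝ᵥ (Bi *ᵥ w) = w ⬝ᵥ (Bi *ᵥ v) := by
    intro v w
    rw [Matrix.dotProduct_mulVec, ← Matrix.mulVec_transpose, hsym, dotProduct_comm]
  have hsubd : Bi *ᵥ (Um *ᵥ z - e) = Bi *ᵥ (Um *ᵥ z) - Bi *ᵥ e := Matrix.mulVec_sub Bi _ _
  -- abbreviations as plain equalities
  have F1 : z ⬝ᵥ (Umᵀ *ᵥ (Bi *ᵥ (Um *ᵥ z - e)))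
      = (Um *ᵥ z) ⬝ᵥ (Bi *ᵥ (Um *ᵥ z)) - (Um *ᵥ z) ⬝ᵥ (Bi *ᵥ e) := by
    rw [hdotT, hsubd, dotProduct_sub]
  have F2 : (Umᵀ *ᵥ (Bi *ᵥ (Um *ᵥ z - e))) ⬝ᵥ (Umᵀ *ᵥ (Bi *ᵥ (Um *ᵥ z - e)))
      = ((Um *ᵥ z) ⬝ᵥ (Bi *ᵥ (Um *ᵥ z)) - (Um *ᵥ z) ⬝ᵥ (Bi *ᵥ e))
        - (e ⬝ᵥ (Bi *ᵥ (Um *ᵥ z)) - e ⬝ᵥ (Bi *ᵥ e)) := by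
    rw [dotProduct_comm, hdotT, hUU (Um *ᵥ z - e), sub_dotProduct,
      hsubd, dotProduct_sub, dotProduct_sub]
  have F3 : e ⬝ᵥ (Bi *ᵥ (Um *ᵥ z)) = (Um *ᵥ z) ⬝ᵥ (Bi *ᵥ e) := hBisym e (Um *ᵥ z)
  have F4 : z ⬝ᵥ ((Umᵀ * (Bi * Um)) *ᵥ z) = (Um *ᵥ z) ⬝ᵥ (Bi *ᵥ (Um *ᵥ z)) := by
    rw [← Matrix.mulVec_mulVec, ← Matrix.mulVec_mulVec, hdotT]
  have LHS : ∑ i, (z - Umᵀ *ᵥ (Bi *ᵥ (Um *ᵥ z - e))) i ^ 2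
      = z ⬝ᵥ z - 2 * (z ⬝ᵥ (Umᵀ *ᵥ (Bi *ᵥ (Um *ᵥ z - e))))
        + (Umᵀ *ᵥ (Bi *ᵥ (Um *ᵥ z - e))) ⬝ᵥ (Umᵀ *ᵥ (Bi *ᵥ (Um *ᵥ z - e))) := by
    rw [aux_nsq_eq_dot, sub_dotProduct, dotProduct_sub,
      dotProduct_sub, dotProduct_comm (Umᵀ *ᵥ (Bi *ᵥ (Um *ᵥ z - e))) z]
    ring
  rw [LHS, F1, F2, F3, F4, aux_nsq_eq_dot z]
  ring

end AuxVec

section AuxDot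
open Matrix
variable {ι : Type*} [Fintype ι]
private lemma aux_dot_sum {n : Type*} (t : Finset n) (z : ι → ℝ) (v : n → ι → ℝ) :
    z ⬝ᵥ (∑ μ ∈ t, v μ) = ∑ μ ∈ t, z ⬝ᵥ v μ := by
  simp only [dotProduct, Finset.sum_apply, Finset.mul_sum]
  rw [Finset.sum_comm]
end AuxDot

section AuxTensor

open Matrix Tensor

variable {I J K S : Type*} {p : ℕ}

/-- The `s`-th column of the unfolding. -/
private def tcol (A : Tensor J S p) (s : S) : J × Fin p → ℝ := fun jk => A jk.1 s jk.2

private lemma tcol_sub (A B : Tensor J S p) (s : S) :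
    tcol (A - B) s = tcol A s - tcol B s := rfl

private lemma tcol_add (A B : Tensor J S p) (s : S) :
    tcol (A + B) s = tcol A s + tcol B s := rfl

private lemma tcol_tprod [Fintype J] (M : Tensor I J p) (A : Tensor J S p) (s : S) :
    tcol (tprod M A) s = (bcirc M) *ᵥ (tcol A s) := by
  funext ik
  simp [tcol, Tensor.tprod, bcirc, Matrix.mulVec, dotProduct, Fintype.sum_prod_type]

private lemma frobSq_eq_tcol [Fintype J] [Fintype S] (A : Tensor J S p) :
    frobSq A = ∑ s : S, ∑ jk : J × Fin p, (tcol A s jk) ^ 2 := by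
  rw [frobSq]
  rw [Finset.sum_comm]
  exact Finset.sum_congr rfl fun s _ => by
    rw [Fintype.sum_prod_type]; rfl

private lemma frobSq_nonneg [Fintype J] [Fintype S] (A : Tensor J S p) : 0 ≤ frobSq A :=
  Finset.sum_nonneg fun _ _ => Finset.sum_nonneg fun _ _ =>
    Finset.sum_nonneg fun _ _ => sq_nonneg _

variable [NeZero p]

private lemma bcirc_tprod [Fintype J] (A : Tensor I J p) (B : Tensor J K p) :
    bcirc (tprod A B) = bcirc A * bcirc B := by
  ext ⟨i, k⟩ ⟨j, l⟩
  simp only [bcirc, Tensor.tprod, Matrix.mul_apply, Matrix.of_apply, Fintype.sum_prod_type]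
  refine Finset.sum_congr rfl fun j' _ => ?_
  refine (Fintype.sum_equiv (Equiv.addRight l) _ _ fun l' => ?_)
  simp only [Equiv.coe_addRight]
  rw [add_sub_cancel_right, sub_sub, add_comm l' l]

private lemma bcirc_ttrans (A : Tensor I J p) : bcirc (ttrans A) = (bcirc A)ᵀ := by
  ext ⟨j, l⟩ ⟨i, k⟩
  simp only [bcirc, ttrans, Matrix.transpose_apply, Matrix.of_apply, neg_sub]

private lemma bcirc_tid [DecidableEq I] :
    bcirc (tid I p) = (1 : Matrix (I × Fin p) (I × Fin p) ℝ) := by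
  ext ⟨i, k⟩ ⟨j, l⟩
  simp only [bcirc, tid, Matrix.of_apply, Matrix.one_apply, Prod.mk.injEq]
  have hkl : ((k - l : Fin p) : ℕ) = 0 ↔ k = l := by
    rw [show (((k - l : Fin p) : ℕ) = 0 ↔ (k - l : Fin p) = 0) from Fin.val_eq_zero_iff,
      sub_eq_zero]
  by_cases h : i = j ∧ k = l
  · rw [if_pos ⟨h.1, hkl.mpr h.2⟩, if_pos h]
  · rw [if_neg fun hc => h ⟨hc.1, hkl.mp hc.2⟩, if_neg h]

private lemma bcirc_tinv_right [Fintype I] [DecidableEq I] {T : Tensor I I p}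
    (h : TInvertible T) : bcirc T * bcirc (tinv T) = 1 := by
  have hspec : tprod T (tinv T) = tid I p := by
    rw [tinv, dif_pos h]; exact h.choose_spec.1
  rw [← bcirc_tprod, hspec, bcirc_tid]

end AuxTensor

open Tensor in
/-- convergence horizon for one step of tensor block randomized Kaczmarz with
noisy measurements `Y + E`, where `U∗X‡ = Y`. -/
theorem stmt6 {m m₁ l p : ℕ} (U : Tensor (Fin m) (Fin m₁) p)
    (Y E : Tensor (Fin m) (Fin l) p) (Xd : Tensor (Fin m₁) (Fin l) p)
    (hY : tprod U Xd = Y)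
    (TU : Finset (Finset (Fin m))) (hTUne : ∀ μ ∈ TU, μ.Nonempty)
    (probU : Finset (Fin m) → ℝ) (hprob : ∀ μ ∈ TU, 0 ≤ probU μ)
    (hprobsum : ∑ μ ∈ TU, probU μ = 1)
    (hinv : ∀ μ ∈ TU, TInvertible (tprod (rowSub U μ) (ttrans (rowSub U μ))))
    (X : Tensor (Fin m₁) (Fin l) p) :
    ∑ μ ∈ TU, probU μ * frobSq (kaczStep U μ X (rowSub Y μ + rowSub E μ) - Xd) ≤
      (1 - minEig (∑ μ ∈ TU, probU μ • bcirc (proj (rowSub U μ)))) * frobSq (X - Xd) +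
        ((TU.sup Finset.card : ℕ) : ℝ) * p *
          ∑ μ ∈ TU, probU μ *
            specNorm ((bcirc (rowSub U μ) * (bcirc (rowSub U μ))ᵀ)⁻¹) *
            frobSq (rowSub E μ) := by
  classical
  rcases Nat.eq_zero_or_pos p with hp | hp
  · subst hp
    simp [frobSq]
  haveI : NeZero p := ⟨hp.ne'⟩
  haveI : Nonempty (Fin p) := Fin.pos_iff_nonempty.mp hp
  have hTUnonempty : TU.Nonempty := by
    rcases Finset.eq_empty_or_nonempty TU with h | h
    · rw [h] at hprobsum; simp at hprobsum
    · exact h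
  set Z : Tensor (Fin m₁) (Fin l) p := X - Xd with hZdef
  set Smat := ∑ μ ∈ TU, probU μ • bcirc (proj (rowSub U μ)) with hSmat
  set dp : ℝ := ((TU.sup Finset.card : ℕ) : ℝ) * p with hdp
  have hdp1 : (1:ℝ) ≤ dp := by
    obtain ⟨μ₀, hμ₀⟩ := hTUnonempty
    have h1 : 1 ≤ μ₀.card := Finset.card_pos.mpr (hTUne μ₀ hμ₀)
    have h2 : μ₀.card ≤ TU.sup Finset.card := Finset.le_sup hμ₀
    have hd : (1:ℝ) ≤ ((TU.sup Finset.card : ℕ) : ℝ) := by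
      exact_mod_cast le_trans h1 h2
    have hpr : (1:ℝ) ≤ (p:ℝ) := by exact_mod_cast hp
    rw [hdp]
    calc (1:ℝ) = 1 * 1 := by ring
      _ ≤ ((TU.sup Finset.card : ℕ) : ℝ) * p :=
        mul_le_mul hd hpr zero_le_one (le_trans zero_le_one hd)
  -- the fundamental right-inverse fact per block
  have h1 : ∀ μ ∈ TU, (bcirc (rowSub U μ) * (bcirc (rowSub U μ))ᵀ) *
      bcirc (tinv (tprod (rowSub U μ) (ttrans (rowSub U μ)))) = 1 := by
    intro μ hμ
    rw [← bcirc_ttrans, ← bcirc_tprod]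
    exact bcirc_tinv_right (hinv μ hμ)
  have hBinveq : ∀ μ ∈ TU, (bcirc (rowSub U μ) * (bcirc (rowSub U μ))ᵀ)⁻¹
      = bcirc (tinv (tprod (rowSub U μ) (ttrans (rowSub U μ)))) := fun μ hμ =>
    Matrix.inv_eq_right_inv (h1 μ hμ)
  have hproj : ∀ μ : Finset (Fin m), bcirc (proj (rowSub U μ))
      = (bcirc (rowSub U μ))ᵀ *
        (bcirc (tinv (tprod (rowSub U μ) (ttrans (rowSub U μ)))) * bcirc (rowSub U μ)) := by
    intro μ
    rw [proj, bcirc_tprod, bcirc_tprod, bcirc_ttrans]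
  -- the key per-block identity
  have key : ∀ μ ∈ TU,
      frobSq (kaczStep U μ X (rowSub Y μ + rowSub E μ) - Xd)
        = frobSq Z
          - (∑ s : Fin l, tcol Z s ⬝ᵥ (bcirc (proj (rowSub U μ)) *ᵥ tcol Z s))
          + (∑ s : Fin l, tcol (rowSub E μ) s ⬝ᵥ
              (bcirc (tinv (tprod (rowSub U μ) (ttrans (rowSub U μ)))) *ᵥ
                tcol (rowSub E μ) s)) := by
    intro μ hμ
    have hYμ : tprod (rowSub U μ) Xd = rowSub Y μ := by rw [← hY]; rfl
    have hcol : ∀ s : Fin l,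
        tcol (kaczStep U μ X (rowSub Y μ + rowSub E μ) - Xd) s
          = tcol Z s - (bcirc (rowSub U μ))ᵀ *ᵥ
              (bcirc (tinv (tprod (rowSub U μ) (ttrans (rowSub U μ)))) *ᵥ
                (bcirc (rowSub U μ) *ᵥ tcol Z s - tcol (rowSub E μ) s)) := by
      intro s
      have e1 : tcol (kaczStep U μ X (rowSub Y μ + rowSub E μ) - Xd) s
          = (tcol X s - tcol Xd s)
            - (bcirc (rowSub U μ))ᵀ *ᵥ
                (bcirc (tinv (tprod (rowSub U μ) (ttrans (rowSub U μ)))) *ᵥ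
                  (bcirc (rowSub U μ) *ᵥ tcol X s
                    - (tcol (rowSub Y μ) s + tcol (rowSub E μ) s))) := by
        simp only [kaczStep, tcol_sub, tcol_tprod, tcol_add, bcirc_ttrans]
        abel
      have hinner : bcirc (rowSub U μ) *ᵥ tcol X s
          - (tcol (rowSub Y μ) s + tcol (rowSub E μ) s)
          = bcirc (rowSub U μ) *ᵥ (tcol X s - tcol Xd s) - tcol (rowSub E μ) s := by
        rw [Matrix.mulVec_sub, ← tcol_tprod (rowSub U μ) Xd s, hYμ]
        abel
      rw [e1, hinner, hZdef, tcol_sub]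
    rw [frobSq_eq_tcol (kaczStep U μ X (rowSub Y μ + rowSub E μ) - Xd),
      frobSq_eq_tcol Z, hproj μ, ← Finset.sum_sub_distrib, ← Finset.sum_add_distrib]
    refine Finset.sum_congr rfl fun s _ => ?_
    rw [hcol s]
    exact aux_vec_key _ _ (h1 μ hμ) _ _
  -- bound for the noise terms
  have hR : ∀ μ ∈ TU,
      (∑ s : Fin l, tcol (rowSub E μ) s ⬝ᵥ
        (bcirc (tinv (tprod (rowSub U μ) (ttrans (rowSub U μ)))) *ᵥ tcol (rowSub E μ) s))
      ≤ dp * (specNorm ((bcirc (rowSub U μ) * (bcirc (rowSub U μ))ᵀ)⁻¹) *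
          frobSq (rowSub E μ)) := by
    intro μ hμ
    haveI : Nonempty {i // i ∈ μ} := Finset.nonempty_coe_sort.mpr (hTUne μ hμ)
    have hnn : 0 ≤ specNorm ((bcirc (rowSub U μ) * (bcirc (rowSub U μ))ᵀ)⁻¹) :=
      aux_specNorm_nonneg _
    have step1 : (∑ s : Fin l, tcol (rowSub E μ) s ⬝ᵥ
        (bcirc (tinv (tprod (rowSub U μ) (ttrans (rowSub U μ)))) *ᵥ tcol (rowSub E μ) s))
        ≤ specNorm ((bcirc (rowSub U μ) * (bcirc (rowSub U μ))ᵀ)⁻¹) *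
            frobSq (rowSub E μ) := by
      rw [frobSq_eq_tcol, Finset.mul_sum]
      refine Finset.sum_le_sum fun s _ => ?_
      rw [hBinveq μ hμ] at hnn ⊢
      exact aux_quadform_le_spec _ _ hnn
    calc _ ≤ specNorm ((bcirc (rowSub U μ) * (bcirc (rowSub U μ))ᵀ)⁻¹) *
          frobSq (rowSub E μ) := step1
      _ ≤ dp * (specNorm ((bcirc (rowSub U μ) * (bcirc (rowSub U μ))ᵀ)⁻¹) *
          frobSq (rowSub E μ)) :=
        le_mul_of_one_le_left (mul_nonneg hnn (frobSq_nonneg _)) hdp1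
  -- bound for the contraction term
  have hQ : minEig Smat * frobSq Z ≤
      ∑ μ ∈ TU, probU μ *
        (∑ s : Fin l, tcol Z s ⬝ᵥ (bcirc (proj (rowSub U μ)) *ᵥ tcol Z s)) := by
    have hswap : ∑ μ ∈ TU, probU μ *
        (∑ s : Fin l, tcol Z s ⬝ᵥ (bcirc (proj (rowSub U μ)) *ᵥ tcol Z s))
        = ∑ s : Fin l, tcol Z s ⬝ᵥ (Smat *ᵥ tcol Z s) := by
      have hper : ∀ s : Fin l, tcol Z s ⬝ᵥ (Smat *ᵥ tcol Z s)
          = ∑ μ ∈ TU, probU μ * (tcol Z s ⬝ᵥ (bcirc (proj (rowSub U μ)) *ᵥ tcol Z s)) := by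
        intro s
        rw [hSmat, aux_sum_mulVec]
        rw [aux_dot_sum]
        refine Finset.sum_congr rfl fun μ _ => ?_
        rw [Matrix.smul_mulVec, dotProduct_smul, smul_eq_mul]
      simp only [hper, Finset.mul_sum]
      rw [Finset.sum_comm]
    rw [hswap]
    have : minEig Smat * frobSq Z = ∑ s : Fin l, minEig Smat * ∑ jk, (tcol Z s jk) ^ 2 := by
      rw [frobSq_eq_tcol, Finset.mul_sum]
    rw [this]
    exact Finset.sum_le_sum fun s _ => aux_minEig_quadform Smat (tcol Z s)
  -- assemble
  calc ∑ μ ∈ TU, probU μ * frobSq (kaczStep U μ X (rowSub Y μ + rowSub E μ) - Xd)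
      = ∑ μ ∈ TU, (probU μ * frobSq Z
          - probU μ * (∑ s : Fin l, tcol Z s ⬝ᵥ (bcirc (proj (rowSub U μ)) *ᵥ tcol Z s))
          + probU μ * (∑ s : Fin l, tcol (rowSub E μ) s ⬝ᵥ
              (bcirc (tinv (tprod (rowSub U μ) (ttrans (rowSub U μ)))) *ᵥ
                tcol (rowSub E μ) s))) := by
        refine Finset.sum_congr rfl fun μ hμ => ?_
        rw [key μ hμ]; ring
    _ = frobSq Z
        - (∑ μ ∈ TU, probU μ *
            (∑ s : Fin l, tcol Z s ⬝ᵥ (bcirc (proj (rowSub U μ)) *ᵥ tcol Z s)))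
        + (∑ μ ∈ TU, probU μ * (∑ s : Fin l, tcol (rowSub E μ) s ⬝ᵥ
            (bcirc (tinv (tprod (rowSub U μ) (ttrans (rowSub U μ)))) *ᵥ
              tcol (rowSub E μ) s))) := by
        rw [Finset.sum_add_distrib, Finset.sum_sub_distrib, ← Finset.sum_mul, hprobsum,
          one_mul]
    _ ≤ frobSq Z - minEig Smat * frobSq Z
        + dp * ∑ μ ∈ TU, probU μ *
            specNorm ((bcirc (rowSub U μ) * (bcirc (rowSub U μ))ᵀ)⁻¹) *
            frobSq (rowSub E μ) := by
        have hRsum : (∑ μ ∈ TU, probU μ * (∑ s : Fin l, tcol (rowSub E μ) s ⬝ᵥ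
            (bcirc (tinv (tprod (rowSub U μ) (ttrans (rowSub U μ)))) *ᵥ
              tcol (rowSub E μ) s)))
            ≤ dp * ∑ μ ∈ TU, probU μ *
                specNorm ((bcirc (rowSub U μ) * (bcirc (rowSub U μ))ᵀ)⁻¹) *
                frobSq (rowSub E μ) := by
          rw [Finset.mul_sum]
          refine Finset.sum_le_sum fun μ hμ => ?_
          calc probU μ * (∑ s : Fin l, tcol (rowSub E μ) s ⬝ᵥ
                (bcirc (tinv (tprod (rowSub U μ) (ttrans (rowSub U μ)))) *ᵥ
                  tcol (rowSub E μ) s))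
              ≤ probU μ * (dp * (specNorm ((bcirc (rowSub U μ) * (bcirc (rowSub U μ))ᵀ)⁻¹) *
                  frobSq (rowSub E μ))) :=
                mul_le_mul_of_nonneg_left (hR μ hμ) (hprob μ hμ)
            _ = dp * (probU μ *
                  specNorm ((bcirc (rowSub U μ) * (bcirc (rowSub U μ))ᵀ)⁻¹) *
                  frobSq (rowSub E μ)) := by ring
        linarith [hQ, hRsum]
    _ = (1 - minEig Smat) * frobSq Z
        + ((TU.sup Finset.card : ℕ) : ℝ) * p *
          ∑ μ ∈ TU, probU μ *
            specNorm ((bcirc (rowSub U μ) * (bcirc (rowSub U μ))ᵀ)⁻¹) *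
            frobSq (rowSub E μ) := by
        rw [hdp]; ring
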